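/- The assignment x ↦ (1, 0, 0), y ↦ (0, 1, 0), q ↦ (0, 0, 1) extends to a monoid isomorphism from the presented monoid QM = ⟨x, y, q | xq = qx, yq = qy, yx = xyq⟩ to ℕ × ℕ × ℕ equipped with the multiplication (k, l, m) * (k', l', m') = (k + k', l + l', m + m' + l·k'). In particular, every element of QM has a unique representative of the form x^k · y^l · q^m: if x^k y^l q^m = x^{k'} y^{l'} q^{m'} in QM then k = k', l = l', m = m'. -/

import Mathlib

open FreeMonoid

/-- The defining relations of the monoid of quantum monomials
`QM = ⟨x, y, q | xq = qx, yq = qy, yx = xyq⟩`, where `x, y, q` are the generators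
`of 0, of 1, of 2` of the free monoid on three letters. -/
inductive QMRel : FreeMonoid (Fin 3) → FreeMonoid (Fin 3) → Prop
  | xq : QMRel (of 0 * of 2) (of 2 * of 0)
  | yq : QMRel (of 1 * of 2) (of 2 * of 1)
  | yx : QMRel (of 1 * of 0) (of 0 * of 1 * of 2)

/-- The congruence on the free monoid generated by the defining relations. -/
def QMcon : Con (FreeMonoid (Fin 3)) := conGen QMRel

/-- The monoid of quantum monomials, presented as the quotient of the free monoid on
three generators by the congruence generated by the relations. -/
def QM : Type := QMcon.Quotient

instance : Monoid QM := inferInstanceAs (Monoid QMcon.Quotient)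

/-- The generator `x` of `QM`. -/
def QM.x : QM := QMcon.mk' (of 0)

/-- The generator `y` of `QM`. -/
def QM.y : QM := QMcon.mk' (of 1)

/-- The generator `q` of `QM`. -/
def QM.q : QM := QMcon.mk' (of 2)

/-- `ℕ × ℕ × ℕ` regarded as a monoid with the twisted multiplication
`(k, l, m) * (k', l', m') = (k + k', l + l', m + m' + l·k')` and identity `(0, 0, 0)`. -/
def QMN : Type := ℕ × ℕ × ℕ

instance : Mul QMN :=
  ⟨fun a b => (a.1 + b.1, a.2.1 + b.2.1, a.2.2 + b.2.2 + a.2.1 * b.1)⟩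

instance : One QMN := ⟨((0, 0, 0) : ℕ × ℕ × ℕ)⟩

instance : Monoid QMN where
  mul_assoc a b c := by
    obtain ⟨k, l, m⟩ := a; obtain ⟨k', l', m'⟩ := b; obtain ⟨k'', l'', m''⟩ := c
    show ((k + k' + k'', l + l' + l'', m + m' + l * k' + m'' + (l + l') * k'') : ℕ × ℕ × ℕ) =
      (k + (k' + k''), l + (l' + l''), m + (m' + m'' + l' * k'') + l * (k' + k''))
    simp only [Prod.mk.injEq]
    refine ⟨by ring, by ring, by ring⟩
  one_mul a := by
    obtain ⟨k, l, m⟩ := a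
    show ((0 + k, 0 + l, 0 + m + 0 * k) : ℕ × ℕ × ℕ) = (k, l, m)
    simp
  mul_one a := by
    obtain ⟨k, l, m⟩ := a
    show ((k + 0, l + 0, m + 0 + l * 0) : ℕ × ℕ × ℕ) = (k, l, m)
    simp


namespace QMAux

/-- Helper to build elements of `QMN`. -/
def t (k l m : ℕ) : QMN := ((k, l, m) : ℕ × ℕ × ℕ)

/-- The underlying map on generators. -/
def genMap : Fin 3 → QMN := ![t 1 0 0, t 0 1 0, t 0 0 1]

def phi0 : FreeMonoid (Fin 3) →* QMN := FreeMonoid.lift genMap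

lemma le_ker : QMcon ≤ Con.ker phi0 := by
  refine Con.conGen_le.mpr ?_
  intro a b h
  cases h <;> rfl

/-- The monoid hom `QM →* QMN`. -/
def phi : QM →* QMN := QMcon.lift phi0 le_ker

lemma mul_def (k l m k' l' m' : ℕ) :
    t k l m * t k' l' m' = t (k + k') (l + l') (m + m' + l * k') := rfl

lemma t_inj {k l m k' l' m' : ℕ} (h : t k l m = t k' l' m') :
    k = k' ∧ l = l' ∧ m = m' := by
  have h' : ((k, l, m) : ℕ × ℕ × ℕ) = ((k', l', m') : ℕ × ℕ × ℕ) := h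
  simpa [Prod.ext_iff] using h'

lemma rel_eq {a b : FreeMonoid (Fin 3)} (h : QMRel a b) :
    (a : QMcon.Quotient) = (b : QMcon.Quotient) :=
  QMcon.eq.mpr (ConGen.Rel.of _ _ h)

lemma coe_of0 : ((of 0 : FreeMonoid (Fin 3)) : QMcon.Quotient) = QM.x := rfl
lemma coe_of1 : ((of 1 : FreeMonoid (Fin 3)) : QMcon.Quotient) = QM.y := rfl
lemma coe_of2 : ((of 2 : FreeMonoid (Fin 3)) : QMcon.Quotient) = QM.q := rfl

lemma xq : QM.x * QM.q = QM.q * QM.x := by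
  have := rel_eq QMRel.xq
  rwa [Con.coe_mul, Con.coe_mul, coe_of0, coe_of2] at this

lemma yq : QM.y * QM.q = QM.q * QM.y := by
  have := rel_eq QMRel.yq
  rwa [Con.coe_mul, Con.coe_mul, coe_of1, coe_of2] at this

lemma yx : QM.y * QM.x = QM.x * QM.y * QM.q := by
  have := rel_eq QMRel.yx
  rwa [Con.coe_mul, Con.coe_mul, Con.coe_mul, coe_of0, coe_of1, coe_of2] at this

lemma cxq : Commute QM.x QM.q := xq
lemma cyq : Commute QM.y QM.q := yq

lemma y_xpow (k : ℕ) : QM.y * QM.x ^ k = QM.x ^ k * QM.y * QM.q ^ k := by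
  induction k with
  | zero => simp
  | succ n ih =>
    calc QM.y * QM.x ^ (n + 1) = QM.y * QM.x ^ n * QM.x := by
          rw [pow_succ, mul_assoc]
      _ = QM.x ^ n * QM.y * (QM.q ^ n * QM.x) := by rw [ih, mul_assoc]
      _ = QM.x ^ n * ((QM.y * QM.x) * QM.q ^ n) := by
          rw [((cxq.pow_right n).symm).eq]
          simp only [mul_assoc]
      _ = QM.x ^ n * ((QM.x * QM.y * QM.q) * QM.q ^ n) := by rw [yx]
      _ = QM.x ^ (n + 1) * QM.y * QM.q ^ (n + 1) := by
          rw [pow_succ, pow_succ']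
          simp only [mul_assoc]

lemma phi_x : phi QM.x = t 1 0 0 := rfl
lemma phi_y : phi QM.y = t 0 1 0 := rfl
lemma phi_q : phi QM.q = t 0 0 1 := rfl

lemma pow_x (k : ℕ) : t 1 0 0 ^ k = t k 0 0 := by
  induction k with
  | zero => rfl
  | succ n ih => rw [pow_succ, ih, mul_def]; try simp [t]

lemma pow_y (l : ℕ) : t 0 1 0 ^ l = t 0 l 0 := by
  induction l with
  | zero => rfl
  | succ n ih => rw [pow_succ, ih, mul_def]; rfl

lemma pow_q (m : ℕ) : t 0 0 1 ^ m = t 0 0 m := by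
  induction m with
  | zero => rfl
  | succ n ih => rw [pow_succ, ih, mul_def]; try simp [t]

lemma phi_normal (k l m : ℕ) :
    phi (QM.x ^ k * QM.y ^ l * QM.q ^ m) = t k l m := by
  rw [map_mul, map_mul, map_pow, map_pow, map_pow, phi_x, phi_y, phi_q,
    pow_x, pow_y, pow_q, mul_def, mul_def]
  congr 1 <;> simp

/-- Every element of `QM` equals its normal form. -/
lemma normal_form (u : QM) : ∀ k l m : ℕ, phi u = t k l m →
    QM.x ^ k * QM.y ^ l * QM.q ^ m = u := by
  refine Con.induction_on (u : QMcon.Quotient) ?_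
  intro w
  induction w using FreeMonoid.recOn with
  | one =>
    intro k l m h
    rw [Con.coe_one, show phi (1 : QMcon.Quotient) = 1 from map_one phi] at h
    obtain ⟨rfl, rfl, rfl⟩ : 0 = k ∧ 0 = l ∧ 0 = m := t_inj h
    simp [Con.coe_one]; rfl
  | of_mul a w ih =>
    intro k l m h
    obtain ⟨k', l', m', hw⟩ : ∃ k' l' m' : ℕ,
        phi (w : QMcon.Quotient) = t k' l' m' := ⟨_, _, _, rfl⟩
    have ihw := ih k' l' m' hw
    rw [Con.coe_mul, show phi ((of a : QMcon.Quotient) * (w : QMcon.Quotient)) = phi (of a : QMcon.Quotient) * phi (w : QMcon.Quotient) from map_mul phi _ _, hw] at h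
    rw [Con.coe_mul, ← ihw]
    fin_cases a
    · have h' : t 1 0 0 * t k' l' m' = t k l m := h
      rw [mul_def] at h'
      obtain ⟨rfl, rfl, rfl⟩ := t_inj h'
      show QM.x ^ (1 + k') * QM.y ^ (0 + l') * QM.q ^ (0 + m' + 0 * k') =
        QM.x * (QM.x ^ k' * QM.y ^ l' * QM.q ^ m')
      simp only [Nat.zero_add, Nat.zero_mul, Nat.add_zero]
      rw [pow_add, pow_one]
      simp only [mul_assoc]
    · have h' : t 0 1 0 * t k' l' m' = t k l m := h
      rw [mul_def] at h'
      obtain ⟨rfl, rfl, rfl⟩ := t_inj h'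
      show QM.x ^ (0 + k') * QM.y ^ (1 + l') * QM.q ^ (0 + m' + 1 * k') =
        QM.y * (QM.x ^ k' * QM.y ^ l' * QM.q ^ m')
      simp only [Nat.zero_add, Nat.one_mul]
      calc QM.x ^ k' * QM.y ^ (1 + l') * QM.q ^ (m' + k')
          = QM.x ^ k' * (QM.y * (QM.y ^ l' * (QM.q ^ k' * QM.q ^ m'))) := by
            rw [pow_add, pow_one, pow_add,
              (Commute.refl QM.q).pow_pow m' k']
            simp only [mul_assoc]
        _ = QM.x ^ k' * (QM.y * (QM.q ^ k' * (QM.y ^ l' * QM.q ^ m'))) := by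
            rw [← mul_assoc (QM.y ^ l'), ((cyq.pow_pow l' k')).eq, mul_assoc]
        _ = (QM.x ^ k' * QM.y * QM.q ^ k') * (QM.y ^ l' * QM.q ^ m') := by
            simp only [mul_assoc]
        _ = QM.y * (QM.x ^ k' * QM.y ^ l' * QM.q ^ m') := by
            rw [← y_xpow]; simp only [mul_assoc]
    · have h' : t 0 0 1 * t k' l' m' = t k l m := h
      rw [mul_def] at h'
      obtain ⟨rfl, rfl, rfl⟩ := t_inj h'
      show QM.x ^ (0 + k') * QM.y ^ (0 + l') * QM.q ^ (1 + m' + 0 * k') =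
        QM.q * (QM.x ^ k' * QM.y ^ l' * QM.q ^ m')
      simp only [Nat.zero_add, Nat.zero_mul, Nat.add_zero]
      have c : Commute QM.q (QM.x ^ k' * QM.y ^ l') :=
        (cxq.symm.pow_right k').mul_right (cyq.symm.pow_right l')
      calc QM.x ^ k' * QM.y ^ l' * QM.q ^ (1 + m')
          = (QM.x ^ k' * QM.y ^ l') * QM.q * QM.q ^ m' := by
            rw [pow_add, pow_one]; simp only [mul_assoc]
        _ = QM.q * (QM.x ^ k' * QM.y ^ l' * QM.q ^ m') := by
            rw [← c.eq]; simp only [mul_assoc]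

lemma phi_bijective : Function.Bijective phi := by
  constructor
  · intro u v huv
    obtain ⟨k, l, m, hu⟩ : ∃ k l m : ℕ, phi u = t k l m := ⟨_, _, _, rfl⟩
    have hv : phi v = t k l m := by rw [← huv]; exact hu
    rw [← normal_form u k l m hu, ← normal_form v k l m hv]
  · intro a
    obtain ⟨k, l, m, ha⟩ : ∃ k l m : ℕ, a = t k l m := ⟨_, _, _, rfl⟩
    exact ⟨QM.x ^ k * QM.y ^ l * QM.q ^ m, by rw [phi_normal, ha]⟩

end QMAux

/-- The assignment `x ↦ (1,0,0)`, `y ↦ (0,1,0)`, `q ↦ (0,0,1)` extends to a monoid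
isomorphism from `QM` to `ℕ × ℕ × ℕ` with the twisted multiplication; in particular the
normal form `x^k y^l q^m` of an element of `QM` is unique. -/
theorem QM.equiv_QMN :
    (∃ φ : QM ≃* QMN,
        φ QM.x = ((1, 0, 0) : ℕ × ℕ × ℕ) ∧
        φ QM.y = ((0, 1, 0) : ℕ × ℕ × ℕ) ∧
        φ QM.q = ((0, 0, 1) : ℕ × ℕ × ℕ)) ∧
    (∀ k l m k' l' m' : ℕ,
        QM.x ^ k * QM.y ^ l * QM.q ^ m = QM.x ^ k' * QM.y ^ l' * QM.q ^ m' →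
        k = k' ∧ l = l' ∧ m = m') := by
  constructor
  · refine ⟨MulEquiv.ofBijective QMAux.phi QMAux.phi_bijective, ?_, ?_, ?_⟩ <;> rfl
  · intro k l m k' l' m' h
    have := congrArg QMAux.phi h
    rw [QMAux.phi_normal, QMAux.phi_normal] at this
    exact QMAux.t_inj this
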